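/- Let N = {0,1,2,...} with edge weights b(x,y)=1 iff |x−y|=1, c ≡ 0, m ≡ 1. Let α > 0 and u a positive function with (L̃_N + α)u(x) = 0 for all x ≥ 1. If for some x ≥ 1 one has u(x) ≥ (2/(2+α)) u(x−1), then u(y) ≥ (1 + α/2)^{y−x} u(x) for all y ≥ x, so u grows exponentially. -/

import Mathlib

/-- On `ℕ` with nearest-neighbour edge weights `1`, `c ≡ 0`, `m ≡ 1`
(so that `L̃_N u(x) = 2u(x) − u(x−1) − u(x+1)` for `x ≥ 1`): if `u > 0` satisfies
`(L̃_N + α)u(x) = 0` for all `x ≥ 1` and `u(x) ≥ (2/(2+α)) u(x−1)` for some `x ≥ 1`,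
then `u(y) ≥ (1 + α/2)^{y−x} u(x)` for all `y ≥ x`, so `u` grows exponentially. -/
theorem exponential_growth_on_N
    (α : ℝ) (hα : 0 < α)
    (u : ℕ → ℝ) (hu : ∀ n, 0 < u n)
    (heq : ∀ n, 1 ≤ n → (2 * u n - u (n - 1) - u (n + 1)) + α * u n = 0)
    (x : ℕ) (hx : 1 ≤ x)
    (hstart : (2 / (2 + α)) * u (x - 1) ≤ u x) :
    ∀ y, x ≤ y → (1 + α / 2) ^ (y - x) * u x ≤ u y := by
  have h2α : (0:ℝ) < 2 + α := by linarith
  have key : ∀ k, (2 / (2 + α)) * u (x + k - 1) ≤ u (x + k) ∧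
      (1 + α / 2) ^ k * u (x) ≤ u (x + k) := by
    intro k
    induction k with
    | zero => simpa using hstart
    | succ k ih =>
      obtain ⟨h1, h2⟩ := ih
      have hn : 1 ≤ x + k := le_trans hx (Nat.le_add_right _ _)
      have he := heq (x + k) hn
      have hprev : u (x + k - 1) ≤ ((2 + α) / 2) * u (x + k) := by
        have h := mul_le_mul_of_nonneg_left h1 (le_of_lt (by positivity : (0:ℝ) < (2 + α) / 2))
        calc u (x + k - 1) = ((2 + α) / 2) * ((2 / (2 + α)) * u (x + k - 1)) := by
              field_simp
          _ ≤ ((2 + α) / 2) * u (x + k) := h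
      have hstep : (1 + α / 2) * u (x + k) ≤ u (x + k + 1) := by linarith
      have hsub : x + (k + 1) - 1 = x + k := by omega
      constructor
      · rw [hsub, show x + (k + 1) = x + k + 1 from rfl]
        have hle : (2 / (2 + α)) * u (x + k) ≤ (1 + α / 2) * u (x + k) := by
          have h1 : (2 / (2 + α)) ≤ 1 := by
            rw [div_le_one h2α]; linarith
          have := hu (x + k)
          nlinarith
        linarith
      · rw [show x + (k + 1) = x + k + 1 from rfl, pow_succ, mul_comm ((1 + α/2)^k) _,
          mul_assoc]
        calc (1 + α / 2) * ((1 + α / 2) ^ k * u x) ≤ (1 + α / 2) * u (x + k) := by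
              apply mul_le_mul_of_nonneg_left h2; linarith
          _ ≤ u (x + k + 1) := hstep
  intro y hy
  have : y = x + (y - x) := by omega
  rw [this, Nat.add_sub_cancel_left]
  exact (key (y - x)).2
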